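/- Let V be a real inner product space and let α₁, α₂, ᾱ₃, ᾱ₄, β₁, β₂, β₃, β₄ ∈ V satisfy: ⟪β₄,β₄⟫ = ⟪α₁,α₁⟫ = ⟪β₁,β₁⟫ = ⟪α₂,α₂⟫ = ⟪β₃,β₃⟫ = ⟪ᾱ₄,ᾱ₄⟫ = 2; ⟪β₄,α₁⟫ = −1, ⟪α₁,β₁⟫ = −1, ⟪β₁,α₂⟫ = −1, ⟪α₂,β₃⟫ = −1, ⟪β₃,ᾱ₄⟫ = −1, and all other inner products among β₄, α₁, β₁, α₂, β₃, ᾱ₄ vanish; ⟪β₃,ᾱ₃⟫ + ⟪β₁,ᾱ₃⟫ = 0 and ⟪α₁,ᾱ₃⟫ = ⟪α₂,ᾱ₃⟫ = ⟪ᾱ₄,ᾱ₃⟫ = ⟪β₄,ᾱ₃⟫ = 0; ⟪ᾱ₄,β₂⟫ + ⟪α₂,β₂⟫ = 0 and ⟪α₁,β₂⟫ = ⟪β₁,β₂⟫ = ⟪β₃,β₂⟫ = ⟪β₄,β₂⟫ = 0 (the relevant Gram relations of the Carter diagram E₈(a₄)). Set α₄ := −(ᾱ₄ + β₃ + α₂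 + β₁ + α₁ + β₄). Then ⟪α₄,α₄⟫ = 2, ⟪α₄,β₄⟫ = −1, and α₄ is orthogonal to each of α₁, α₂, ᾱ₃, β₁, β₂, β₃ (the Gram relations of the Carter diagram E₈(a₁)). -/
import Mathlib


open scoped RealInnerProductSpace


theorem stmt11 {V : Type*} [NormedAddCommGroup V] [InnerProductSpace ℝ V]
    (α₁ α₂ αb₃ αb₄ β₁ β₂ β₃ β₄ : V)
    (h0 : ⟪β₄, β₄⟫ = 2)
    (h1 : ⟪α₁, α₁⟫ = 2)
    (h2 : ⟪β₁, β₁⟫ = 2)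
    (h3 : ⟪α₂, α₂⟫ = 2)
    (h4 : ⟪β₃, β₃⟫ = 2)
    (h5 : ⟪αb₄, αb₄⟫ = 2)
    (h6 : ⟪β₄, α₁⟫ = -1)
    (h7 : ⟪α₁, β₁⟫ = -1)
    (h8 : ⟪β₁, α₂⟫ = -1)
    (h9 : ⟪α₂, β₃⟫ = -1)
    (h10 : ⟪β₃, αb₄⟫ = -1)
    (h11 : ⟪β₄, β₁⟫ = 0)
    (h12 : ⟪β₄, α₂⟫ = 0)
    (h13 : ⟪β₄, β₃⟫ = 0)
    (h14 : ⟪β₄, αb₄⟫ = 0)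
    (h15 : ⟪α₁, α₂⟫ = 0)
    (h16 : ⟪α₁, β₃⟫ = 0)
    (h17 : ⟪α₁, αb₄⟫ = 0)
    (h18 : ⟪β₁, β₃⟫ = 0)
    (h19 : ⟪β₁, αb₄⟫ = 0)
    (h20 : ⟪α₂, αb₄⟫ = 0)
    (h21 : ⟪β₃, αb₃⟫ + ⟪β₁, αb₃⟫ = 0)
    (h22 : ⟪α₁, αb₃⟫ = 0)
    (h23 : ⟪α₂, αb₃⟫ = 0)
    (h24 : ⟪αb₄, αb₃⟫ = 0)
    (h25 : ⟪β₄, αb₃⟫ = 0)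
    (h26 : ⟪αb₄, β₂⟫ + ⟪α₂, β₂⟫ = 0)
    (h27 : ⟪α₁, β₂⟫ = 0)
    (h28 : ⟪β₁, β₂⟫ = 0)
    (h29 : ⟪β₃, β₂⟫ = 0)
    (h30 : ⟪β₄, β₂⟫ = 0)
    (α₄ : V) (hdef : α₄ = -(αb₄ + β₃ + α₂ + β₁ + α₁ + β₄)) :
    ⟪α₄, α₄⟫ = 2 ∧
    ⟪α₄, β₄⟫ = -1 ∧
    ⟪α₄, α₁⟫ = 0 ∧
    ⟪α₄, α₂⟫ = 0 ∧
    ⟪α₄, αb₃⟫ = 0 ∧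
    ⟪α₄, β₁⟫ = 0 ∧
    ⟪α₄, β₂⟫ = 0 ∧
    ⟪α₄, β₃⟫ = 0 := by
  subst hdef
  have c1 : ⟪α₁, β₄⟫ = -1 := by rw [real_inner_comm]; exact h6
  have c2 : ⟪β₁, α₁⟫ = -1 := by rw [real_inner_comm]; exact h7
  have c3 : ⟪α₂, β₁⟫ = -1 := by rw [real_inner_comm]; exact h8
  have c4 : ⟪β₃, α₂⟫ = -1 := by rw [real_inner_comm]; exact h9
  have c5 : ⟪αb₄, β₃⟫ = -1 := by rw [real_inner_comm]; exact h10
  have c6 : ⟪β₁, β₄⟫ = 0 := by rw [real_inner_comm]; exact h11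
  have c7 : ⟪α₂, β₄⟫ = 0 := by rw [real_inner_comm]; exact h12
  have c8 : ⟪β₃, β₄⟫ = 0 := by rw [real_inner_comm]; exact h13
  have c9 : ⟪αb₄, β₄⟫ = 0 := by rw [real_inner_comm]; exact h14
  have c10 : ⟪α₂, α₁⟫ = 0 := by rw [real_inner_comm]; exact h15
  have c11 : ⟪β₃, α₁⟫ = 0 := by rw [real_inner_comm]; exact h16
  have c12 : ⟪αb₄, α₁⟫ = 0 := by rw [real_inner_comm]; exact h17
  have c13 : ⟪β₃, β₁⟫ = 0 := by rw [real_inner_comm]; exact h18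
  have c14 : ⟪αb₄, β₁⟫ = 0 := by rw [real_inner_comm]; exact h19
  have c15 : ⟪αb₄, α₂⟫ = 0 := by rw [real_inner_comm]; exact h20
  refine ⟨?_, ?_, ?_, ?_, ?_, ?_, ?_, ?_⟩ <;>
    simp only [inner_neg_left, inner_neg_right, inner_add_left, inner_add_right] <;>
    linarith
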